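/- Let A be a unital C*-algebra and V a countably generated Hilbert A-module. Then for every bounded A-linear functional f ∈ V' = Hom_A(V, A) there exists a sequence {x_n} in V such that ⟨x_n, z⟩ → f(z) in norm for every z ∈ V; i.e. the completion of V with respect to τ_{V̂} coincides with V' extending the canonical embedding x ↦ ⟨x,·⟩. -/

import Mathlib

open Filter Topology

/-- A bounded `A`-linear map from a Hilbert C*-module `E` to the C*-algebra `A`,
an element of the dual module `V' = Hom_A(V, A)`. -/
structure ModuleDual (A E : Type*) [NonUnitalCStarAlgebra A] [NormedAddCommGroup E]
    [NormedSpace ℂ E] [SMul Aᵐᵒᵖ E] where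
  toFun : E → A
  map_add' : ∀ x y : E, toFun (x + y) = toFun x + toFun y
  map_op_smul' : ∀ (a : A) (x : E), toFun (MulOpposite.op a • x) = toFun x * a
  bound' : ∃ C : ℝ, ∀ x : E, ‖toFun x‖ ≤ C * ‖x‖

/-- The class `CStarModule` as it stood in Mathlib of December 2024: a right Hilbert
`A`-module (with `SMul Aᵐᵒᵖ E`), the inner product being `A`-linear on the right. -/
class CStarModuleOld (A E : Type*) [NonUnitalSemiring A] [StarRing A]
    [Module ℂ A] [AddCommGroup E] [Module ℂ E] [PartialOrder A] [SMul Aᵐᵒᵖ E] [Norm A] [Norm E]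
    extends Inner A E where
  inner_add_right {x} {y} {z} : inner x (y + z) = inner x y + inner x z
  inner_self_nonneg {x} : 0 ≤ inner x x
  inner_self {x} : inner x x = 0 ↔ x = 0
  inner_op_smul_right {a : A} {x y : E} : inner x (MulOpposite.op a • y) = inner x y * a
  inner_smul_right_complex {z : ℂ} {x} {y} : inner x (z • y) = z • inner x y
  star_inner x y : star (inner x y) = inner y x
  norm_eq_sqrt_norm_inner_self x : ‖x‖ = √‖inner x x‖

variable {A : Type*} [CStarAlgebra A] [PartialOrder A] [StarOrderedRing A]
variable {E : Type*} [NormedAddCommGroup E] [NormedSpace ℂ E] [SMul Aᵐᵒᵖ E] [CStarModuleOld A E]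

local notation "⟪" x ", " y "⟫" => inner (𝕜 := A) x y

set_option linter.unusedSectionVars false

section Aux

namespace CStarModuleOld

lemma inner_add_left {x y z : E} : ⟪x + y, z⟫ = ⟪x, z⟫ + ⟪y, z⟫ := by
  rw [← star_star (r := ⟪x + y, z⟫)]
  simp only [star_inner, inner_add_right, star_add]

lemma inner_op_smul_left {a : A} {x y : E} : ⟪MulOpposite.op a • x, y⟫ = star a * ⟪x, y⟫ := by
  rw [← star_inner, inner_op_smul_right, star_mul, star_inner]

lemma inner_smul_left_complex {z : ℂ} {x y : E} : ⟪z • x, y⟫ = star z • ⟪x, y⟫ := by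
  rw [← star_inner, inner_smul_right_complex, star_smul, star_inner]

lemma inner_smul_left_real {z : ℝ} {x y : E} : ⟪z • x, y⟫ = z • ⟪x, y⟫ := by
  have h₁ : z • x = (z : ℂ) • x := by simp
  rw [h₁, inner_smul_left_complex]
  simp

lemma inner_smul_right_real {z : ℝ} {x y : E} : ⟪x, z • y⟫ = z • ⟪x, y⟫ := by
  have h₁ : z • y = (z : ℂ) • y := by simp
  rw [h₁, inner_smul_right_complex]
  simp

lemma inner_zero_right {x : E} : ⟪x, 0⟫ = 0 := by
  have h : ⟪x, (0:E) + 0⟫ = ⟪x, 0⟫ + ⟪x, 0⟫ := inner_add_right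
  rw [add_zero] at h
  exact (left_eq_add.mp h)

lemma inner_neg_right {x y : E} : ⟪x, -y⟫ = -⟪x, y⟫ := by
  rw [eq_neg_iff_add_eq_zero, ← inner_add_right, neg_add_cancel, inner_zero_right]

lemma inner_sub_right {x y z : E} : ⟪x, y - z⟫ = ⟪x, y⟫ - ⟪x, z⟫ := by
  rw [sub_eq_add_neg, inner_add_right, inner_neg_right, ← sub_eq_add_neg]

lemma inner_sub_left {x y z : E} : ⟪x - y, z⟫ = ⟪x, z⟫ - ⟪y, z⟫ := by
  rw [← star_inner, inner_sub_right, star_sub, star_inner, star_inner]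

lemma inner_sum_right {ι : Type*} {s : Finset ι} {x : E} {y : ι → E} :
    ⟪x, ∑ i ∈ s, y i⟫ = ∑ i ∈ s, ⟪x, y i⟫ := by
  classical
  induction s using Finset.induction_on with
  | empty => simp [inner_zero_right]
  | insert i s hi ih => rw [Finset.sum_insert hi, Finset.sum_insert hi, inner_add_right, ih]

lemma inner_sum_left {ι : Type*} {s : Finset ι} {x : ι → E} {y : E} :
    ⟪∑ i ∈ s, x i, y⟫ = ∑ i ∈ s, ⟪x i, y⟫ := by
  rw [← star_inner, inner_sum_right, star_sum]
  exact Finset.sum_congr rfl fun i _ => star_inner _ _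

lemma norm_sq_eq {x : E} : ‖x‖ ^ 2 = ‖⟪x, x⟫‖ := by
  rw [norm_eq_sqrt_norm_inner_self (A := A) x, Real.sq_sqrt (norm_nonneg _)]

lemma inner_mul_inner_swap_le' {x y : E} : ⟪y, x⟫ * ⟪x, y⟫ ≤ ‖x‖ ^ 2 • ⟪y, y⟫ := by
  rcases eq_or_ne x 0 with h | h
  · subst h
    rw [inner_zero_right, zero_mul, norm_zero]
    simp
  · have h₁ : ∀ (a : A),
        (0 : A) ≤ ‖x‖ ^ 2 • (a * star a) - ‖x‖ ^ 2 • (a * ⟪x, y⟫)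
                  - ‖x‖ ^ 2 • (⟪y, x⟫ * star a) + ‖x‖ ^ 2 • (‖x‖ ^ 2 • ⟪y, y⟫) := fun a => by
      calc (0 : A) ≤ ⟪MulOpposite.op (star a) • x - ‖x‖ ^ 2 • y,
              MulOpposite.op (star a) • x - ‖x‖ ^ 2 • y⟫ := by exact inner_self_nonneg
            _ = a * ⟪x, x⟫ * star a - ‖x‖ ^ 2 • (a * ⟪x, y⟫)
                  - ‖x‖ ^ 2 • (⟪y, x⟫ * star a) + ‖x‖ ^ 2 • (‖x‖ ^ 2 • ⟪y, y⟫) := by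
                      simp only [inner_sub_right, inner_op_smul_right, inner_sub_left,
                        inner_op_smul_left, inner_smul_left_real, mul_sub, sub_mul, mul_smul_comm,
                        smul_mul_assoc, inner_smul_right_real, smul_sub, mul_assoc, star_star]
                      abel
            _ ≤ ‖x‖ ^ 2 • (a * star a) - ‖x‖ ^ 2 • (a * ⟪x, y⟫)
                  - ‖x‖ ^ 2 • (⟪y, x⟫ * star a) + ‖x‖ ^ 2 • (‖x‖ ^ 2 • ⟪y, y⟫) := by
                      gcongr
                      calc _ ≤ ‖⟪x, x⟫‖ • (a * star a) :=
                          CStarAlgebra.star_right_conjugate_le_norm_smul (hb := star_inner x x)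
                        _ = ‖x‖ ^ 2 • (a * star a) := by rw [norm_sq_eq (A := A)]
    specialize h₁ ⟪y, x⟫
    simp only [star_inner, sub_self, zero_sub, le_neg_add_iff_add_le, add_zero] at h₁
    rwa [smul_le_smul_iff_of_pos_left (pow_pos (norm_pos_iff.mpr h) _)] at h₁

variable (E) in
lemma norm_inner_le {x y : E} : ‖⟪x, y⟫‖ ≤ ‖x‖ * ‖y‖ := by
  have := calc ‖⟪x, y⟫‖ ^ 2 = ‖⟪y, x⟫ * ⟪x, y⟫‖ := by
                rw [← star_inner x, CStarRing.norm_star_mul_self, pow_two]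
    _ ≤ ‖‖x‖ ^ 2 • ⟪y, y⟫‖ := by
                refine CStarAlgebra.norm_le_norm_of_nonneg_of_le ?_ inner_mul_inner_swap_le'
                rw [← star_inner x]
                exact star_mul_self_nonneg _
    _ = ‖x‖ ^ 2 * ‖⟪y, y⟫‖ := by simp [norm_smul]
    _ = ‖x‖ ^ 2 * ‖y‖ ^ 2 := by rw [norm_sq_eq (A := A) (x := y)]
    _ = (‖x‖ * ‖y‖) ^ 2 := by simp only [mul_pow]
  refine (pow_le_pow_iff_left₀ (norm_nonneg _) ?_ (by simp)).mp this
  exact mul_nonneg (norm_nonneg _) (norm_nonneg _)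

end CStarModuleOld

lemma my_inner_ext (u v : E) (h : ∀ w : E, ⟪w, u⟫ = ⟪w, v⟫) : u = v := by
  have h2 : ⟪u - v, u - v⟫ = 0 := by
    rw [CStarModuleOld.inner_sub_right, h (u - v), sub_self]
  exact sub_eq_zero.mp (CStarModuleOld.inner_self.mp h2)

lemma my_smul_op (c : ℂ) (a : A) (y : E) :
    c • (MulOpposite.op a • y) = MulOpposite.op (c • a) • y := by
  refine my_inner_ext (A := A) _ _ fun w => ?_
  rw [CStarModuleOld.inner_smul_right_complex, CStarModuleOld.inner_op_smul_right,
    CStarModuleOld.inner_op_smul_right, mul_smul_comm]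

lemma my_norm_op_smul_le (a : A) (y : E) : ‖MulOpposite.op a • y‖ ≤ ‖y‖ * ‖a‖ := by
  have h1 : ‖MulOpposite.op a • y‖ ^ 2 = ‖star a * ⟪y, y⟫ * a‖ := by
    rw [CStarModuleOld.norm_sq_eq (A := A)]
    congr 1
    rw [CStarModuleOld.inner_op_smul_right, CStarModuleOld.inner_op_smul_left, mul_assoc]
  have h2 : ‖star a * ⟪y, y⟫ * a‖ ≤ (‖y‖ * ‖a‖) ^ 2 := by
    calc ‖star a * ⟪y, y⟫ * a‖ ≤ ‖star a * ⟪y, y⟫‖ * ‖a‖ := norm_mul_le _ _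
      _ ≤ ‖star a‖ * ‖⟪y, y⟫‖ * ‖a‖ := by gcongr; exact norm_mul_le _ _
      _ = ‖a‖ * ‖y‖ ^ 2 * ‖a‖ := by rw [norm_star, ← CStarModuleOld.norm_sq_eq (A := A)]
      _ = (‖y‖ * ‖a‖) ^ 2 := by ring
  have h3 : ‖MulOpposite.op a • y‖ ^ 2 ≤ (‖y‖ * ‖a‖) ^ 2 := h1 ▸ h2
  exact (pow_le_pow_iff_left₀ (norm_nonneg _) (by positivity) two_ne_zero).mp h3

/-- rank-one operator `θ_{y,y}` on a Hilbert C*-module -/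
noncomputable def myTheta (y : E) : E →L[ℂ] E :=
  LinearMap.mkContinuous
    { toFun := fun z => MulOpposite.op ⟪y, z⟫ • y
      map_add' := fun u v => by
        refine my_inner_ext (A := A) _ _ fun w => ?_
        rw [CStarModuleOld.inner_add_right (x := y)]
        rw [CStarModuleOld.inner_op_smul_right, CStarModuleOld.inner_add_right,
          CStarModuleOld.inner_op_smul_right, CStarModuleOld.inner_op_smul_right, mul_add]
      map_smul' := fun c u => by
        simp only [RingHom.id_apply]
        rw [CStarModuleOld.inner_smul_right_complex, ← my_smul_op] }
    (‖y‖ * ‖y‖)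
    (fun z => by
      calc ‖MulOpposite.op ⟪y, z⟫ • y‖ ≤ ‖y‖ * ‖⟪y, z⟫‖ := my_norm_op_smul_le _ _
        _ ≤ ‖y‖ * (‖y‖ * ‖z‖) := by gcongr; exact CStarModuleOld.norm_inner_le E
        _ = ‖y‖ * ‖y‖ * ‖z‖ := by ring)

lemma myTheta_apply (y z : E) : myTheta (A := A) y z = MulOpposite.op ⟪y, z⟫ • y := rfl

lemma inner_myTheta (y u v : E) : ⟪u, myTheta (A := A) y v⟫ = ⟪u, y⟫ * ⟪y, v⟫ := by
  rw [myTheta_apply, CStarModuleOld.inner_op_smul_right]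

lemma myTheta_symm (y u v : E) : ⟪myTheta (A := A) y u, v⟫ = ⟪u, myTheta (A := A) y v⟫ := by
  rw [myTheta_apply, CStarModuleOld.inner_op_smul_left, inner_myTheta,
    CStarModuleOld.star_inner]

lemma inner_myTheta_self_nonneg (y z : E) : 0 ≤ ⟪z, myTheta (A := A) y z⟫ := by
  rw [inner_myTheta, ← CStarModuleOld.star_inner y z]
  exact star_mul_self_nonneg _

lemma my_opNorm_smul (s : ℝ) (T : E →L[ℂ] E) : ‖s • T‖ ≤ |s| * ‖T‖ := by
  simpa using ContinuousLinearMap.opNorm_smul_le (𝕜' := ℝ) s T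

lemma my_lower_bound (T : E →L[ℂ] E) (hpos : ∀ z : E, 0 ≤ ⟪z, T z⟫) {ε : ℝ} (hε : 0 < ε)
    {s : ℝ} (hs : 0 ≤ s) (z : E) : ε * ‖z‖ ≤ ‖(s • T + ε • (1 : E →L[ℂ] E)) z‖ := by
  rcases eq_or_ne z 0 with rfl | hz
  · simp
  have hzpos : 0 < ‖z‖ := norm_pos_iff.mpr hz
  have h0 : (0 : A) ≤ ⟪z, (s • T) z⟫ := by
    have : (s • T) z = s • T z := by simp
    rw [this, CStarModuleOld.inner_smul_right_real]
    exact smul_nonneg hs (hpos z)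
  have hsum : ⟪z, (s • T + ε • (1 : E →L[ℂ] E)) z⟫ = ⟪z, (s • T) z⟫ + ε • ⟪z, z⟫ := by
    have : (s • T + ε • (1 : E →L[ℂ] E)) z = (s • T) z + ε • z := by simp
    rw [this, CStarModuleOld.inner_add_right, CStarModuleOld.inner_smul_right_real]
  have hle : ε • ⟪z, z⟫ ≤ ⟪z, (s • T + ε • (1 : E →L[ℂ] E)) z⟫ := by
    rw [hsum]; exact le_add_of_nonneg_left h0
  have h1 : ‖ε • ⟪z, z⟫‖ ≤ ‖⟪z, (s • T + ε • (1 : E →L[ℂ] E)) z⟫‖ :=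
    CStarAlgebra.norm_le_norm_of_nonneg_of_le
      (smul_nonneg hε.le CStarModuleOld.inner_self_nonneg) hle
  have h2 : ‖ε • ⟪z, z⟫‖ = ε * ‖z‖ ^ 2 := by
    rw [norm_smul, Real.norm_eq_abs, abs_of_pos hε, ← CStarModuleOld.norm_sq_eq (A := A)]
  have h3 : ‖⟪z, (s • T + ε • (1 : E →L[ℂ] E)) z⟫‖ ≤ ‖z‖ * ‖(s • T + ε • (1 : E →L[ℂ] E)) z‖ :=
    CStarModuleOld.norm_inner_le E
  rw [h2] at h1
  nlinarith [h1.trans h3]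

lemma my_isUnit [CompleteSpace E] (T : E →L[ℂ] E) (hpos : ∀ z : E, 0 ≤ ⟪z, T z⟫)
    {ε : ℝ} (hε : 0 < ε) : IsUnit (T + ε • (1 : E →L[ℂ] E)) := by
  set δ : ℝ := ε / (2 * (‖T‖ + 1)) with hδdef
  have hTnn : (0:ℝ) ≤ ‖T‖ := norm_nonneg T
  have hδ : 0 < δ := by positivity
  have step : ∀ s : ℝ, 0 ≤ s → IsUnit (s • T + ε • (1 : E →L[ℂ] E)) →
      ∀ s' : ℝ, 0 ≤ s' → |s' - s| ≤ δ → IsUnit (s' • T + ε • (1 : E →L[ℂ] E)) := by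
    intro s hs hU s' hs' hss
    obtain ⟨U, hU⟩ := hU
    have hinv : ∀ w : E, ‖(↑U⁻¹ : E →L[ℂ] E) w‖ ≤ ε⁻¹ * ‖w‖ := by
      intro w
      have := my_lower_bound T hpos hε hs ((↑U⁻¹ : E →L[ℂ] E) w)
      have h4 : (↑U : E →L[ℂ] E) ((↑U⁻¹ : E →L[ℂ] E) w) = w := by
        rw [← ContinuousLinearMap.mul_apply, U.mul_inv, ContinuousLinearMap.one_apply]
      rw [← hU, h4] at this
      calc ‖(↑U⁻¹ : E →L[ℂ] E) w‖ = ε⁻¹ * (ε * ‖(↑U⁻¹ : E →L[ℂ] E) w‖) := by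
            field_simp
        _ ≤ ε⁻¹ * ‖w‖ := by gcongr
    have hinvnorm : ‖(↑U⁻¹ : E →L[ℂ] E)‖ ≤ ε⁻¹ :=
      ContinuousLinearMap.opNorm_le_bound _ (by positivity) hinv
    set v : E →L[ℂ] E := (↑U⁻¹ : E →L[ℂ] E) * ((s' - s) • T) with hv
    have hvnorm : ‖v‖ < 1 := by
      calc ‖v‖ ≤ ‖(↑U⁻¹ : E →L[ℂ] E)‖ * ‖(s' - s) • T‖ := norm_mul_le _ _
        _ ≤ ε⁻¹ * (|s' - s| * ‖T‖) := by
            refine mul_le_mul hinvnorm (my_opNorm_smul _ _) (norm_nonneg _) (by positivity)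
        _ ≤ ε⁻¹ * (δ * ‖T‖) := by gcongr
        _ < 1 := by
            have heq : ε⁻¹ * (δ * ‖T‖) = ‖T‖ / (2 * (‖T‖ + 1)) := by
              rw [hδdef]; field_simp
            rw [heq, div_lt_one (by positivity)]
            linarith
    have hunit1 : IsUnit (1 + v) := by
      have := (Units.oneSub (-v) (by rwa [norm_neg])).isUnit
      rwa [Units.val_oneSub, sub_neg_eq_add] at this
    have key : s' • T + ε • (1 : E →L[ℂ] E) = ↑U * (1 + v) := by
      rw [mul_add, mul_one, hv, ← mul_assoc, U.mul_inv, one_mul, hU, sub_smul]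
      abel
    rw [key]
    exact U.isUnit.mul hunit1
  have main : ∀ k : ℕ, ∀ s : ℝ, 0 ≤ s → s ≤ k * δ → IsUnit (s • T + ε • (1 : E →L[ℂ] E)) := by
    intro k
    induction k with
    | zero =>
        intro s hs hsk
        simp only [Nat.cast_zero, zero_mul] at hsk
        have : s = 0 := le_antisymm hsk hs
        subst this
        rw [zero_smul, zero_add]
        exact ⟨⟨ε • (1 : E →L[ℂ] E), ε⁻¹ • (1 : E →L[ℂ] E),
          by ext z; simp [smul_smul, mul_inv_cancel₀ hε.ne', inv_mul_cancel₀ hε.ne'],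
          by ext z; simp [smul_smul, mul_inv_cancel₀ hε.ne', inv_mul_cancel₀ hε.ne']⟩, rfl⟩
    | succ k ih =>
        intro s hs hsk
        rcases le_or_gt s (k * δ) with h | h
        · exact ih s hs h
        · set sp : ℝ := max (s - δ) 0 with hsp
          have hsp0 : 0 ≤ sp := le_max_right _ _
          have hspk : sp ≤ k * δ := by
            refine max_le (by push_cast at hsk; linarith) (by positivity)
          have hsps : |s - sp| ≤ δ := by
            rw [abs_le]
            constructor
            · have : sp ≤ s := max_le (by linarith) hs
              linarith
            · have : s - δ ≤ sp := le_max_left _ _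
              linarith
          exact step sp hsp0 (ih sp hsp0 hspk) s hs hsps
  obtain ⟨k, hk⟩ := exists_nat_ge (1 / δ)
  have h1k : (1:ℝ) ≤ k * δ := by
    rw [div_le_iff₀ hδ] at hk
    linarith
  have := main k 1 zero_le_one h1k
  rwa [one_smul] at this

end Aux

set_option maxHeartbeats 2000000 in
/-- Let `A` be a unital C*-algebra and `E` a countably generated Hilbert `A`-module. Then
every bounded `A`-linear functional `f : E → A` is the `τ_V̂`-limit of a sequence from `E`:
there is `{x n}` in `E` with `⟪x n, z⟫ → f z` in norm for every `z`. Hence the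
`τ_V̂`-completion of `E` coincides with the dual module `E'`, extending the canonical
embedding `x ↦ ⟪x, ·⟫`. -/
theorem tauHat_completion_eq_dual [CompleteSpace E] (g : ℕ → E)
    (hg : Dense (Submodule.span ℂ
      {y : E | ∃ (i : ℕ) (a : A), y = MulOpposite.op a • g i} : Set E))
    (f : ModuleDual A E) :
    ∃ x : ℕ → E, ∀ z : E, Tendsto (fun n => ⟪x n, z⟫) atTop (𝓝 (f.toFun z)) := by
  classical
  set Sset : Set E := {y : E | ∃ (i : ℕ) (a : A), y = MulOpposite.op a • g i} with hSset
  -- the functional as an additive monoid hom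
  set F : E →+ A := AddMonoidHom.mk' f.toFun f.map_add' with hF
  have hFeq : ∀ u : E, F u = f.toFun u := fun u => rfl
  obtain ⟨C₀, hC₀⟩ := f.bound'
  set C : ℝ := max C₀ 1 with hCdef
  have hC1 : (1:ℝ) ≤ C := le_max_right _ _
  have hCpos : (0:ℝ) < C := lt_of_lt_of_le one_pos hC1
  have hC : ∀ u : E, ‖f.toFun u‖ ≤ C * ‖u‖ := fun u =>
    (hC₀ u).trans (mul_le_mul_of_nonneg_right (le_max_left _ _) (norm_nonneg u))
  -- the truncated "frame" operators
  set T : ℕ → E →L[ℂ] E := fun n => ∑ i ∈ Finset.range (n+1), myTheta (A := A) (g i) with hT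
  have hTapp : ∀ n (z : E), T n z = ∑ i ∈ Finset.range (n+1), myTheta (A := A) (g i) z := by
    intro n z
    rw [hT]
    exact ContinuousLinearMap.sum_apply _ _ _
  have hTpos : ∀ n (z : E), 0 ≤ ⟪z, T n z⟫ := by
    intro n z
    rw [hTapp, CStarModuleOld.inner_sum_right]
    exact Finset.sum_nonneg fun i _ => inner_myTheta_self_nonneg (g i) z
  have hTsym : ∀ n (u v : E), ⟪T n u, v⟫ = ⟪u, T n v⟫ := by
    intro n u v
    rw [hTapp, hTapp, CStarModuleOld.inner_sum_left, CStarModuleOld.inner_sum_right]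
    exact Finset.sum_congr rfl fun i _ => myTheta_symm (g i) u v
  set ε : ℕ → ℝ := fun n => 1 / (n + 1) with hεdef
  have hε : ∀ n, 0 < ε n := fun n => by positivity
  have hUn : ∀ n, IsUnit (T n + ε n • (1 : E →L[ℂ] E)) := fun n =>
    my_isUnit (T n) (hTpos n) (hε n)
  choose U hU using hUn
  set S : ℕ → E →L[ℂ] E := fun n => ↑(U n)⁻¹ with hS
  have hUS : ∀ n (w : E), (T n + ε n • (1 : E →L[ℂ] E)) (S n w) = w := by
    intro n w
    rw [← hU n, hS]
    rw [← ContinuousLinearMap.mul_apply, Units.mul_inv, ContinuousLinearMap.one_apply]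
  have hUS' : ∀ n (w : E), T n (S n w) + ε n • S n w = w := by
    intro n w
    have := hUS n w
    simpa using this
  have hTS_eq : ∀ n (w : E), T n (S n w) = w - ε n • S n w := by
    intro n w
    rw [eq_sub_iff_add_eq]
    exact hUS' n w
  have hTεsym : ∀ n (a b : E),
      ⟪(T n + ε n • (1 : E →L[ℂ] E)) a, b⟫ = ⟪a, (T n + ε n • (1 : E →L[ℂ] E)) b⟫ := by
    intro n a b
    have e1 : (T n + ε n • (1 : E →L[ℂ] E)) a = T n a + ε n • a := by simp
    have e2 : (T n + ε n • (1 : E →L[ℂ] E)) b = T n b + ε n • b := by simp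
    rw [e1, e2, CStarModuleOld.inner_add_left, CStarModuleOld.inner_add_right,
      hTsym, CStarModuleOld.inner_smul_left_real, CStarModuleOld.inner_smul_right_real]
  have hSsym : ∀ n (u v : E), ⟪S n u, v⟫ = ⟪u, S n v⟫ := by
    intro n u v
    calc ⟪S n u, v⟫ = ⟪S n u, (T n + ε n • (1 : E →L[ℂ] E)) (S n v)⟫ := by rw [hUS]
      _ = ⟪(T n + ε n • (1 : E →L[ℂ] E)) (S n u), S n v⟫ := (hTεsym n _ _).symm
      _ = ⟪u, S n v⟫ := by rw [hUS]
  -- the approximating sequence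
  set x : ℕ → E := fun n =>
    ∑ i ∈ Finset.range (n+1), MulOpposite.op (star (f.toFun (g i))) • S n (g i) with hx
  -- master identity
  have hxz : ∀ n (z : E), ⟪x n, z⟫ = f.toFun (T n (S n z)) := by
    intro n z
    have lhs : ⟪x n, z⟫ = ∑ i ∈ Finset.range (n+1), f.toFun (g i) * ⟪g i, S n z⟫ := by
      rw [hx]
      rw [CStarModuleOld.inner_sum_left]
      refine Finset.sum_congr rfl fun i _ => ?_
      rw [CStarModuleOld.inner_op_smul_left, star_star, hSsym]
    have rhs : f.toFun (T n (S n z)) = ∑ i ∈ Finset.range (n+1),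
        f.toFun (g i) * ⟪g i, S n z⟫ := by
      rw [← hFeq, hTapp, map_sum]
      refine Finset.sum_congr rfl fun i _ => ?_
      rw [hFeq, myTheta_apply, f.map_op_smul']
    rw [lhs, rhs]
  -- uniform norm bound on x n
  have hTSle : ∀ n (z : E), ‖T n (S n z)‖ ≤ ‖z‖ := by
    intro n z
    set u : E := S n z with hu
    have hz : (T n + ε n • (1 : E →L[ℂ] E)) u = z := hUS n z
    have e1 : ⟪T n u, T n u⟫ = ⟪u, T n (T n u)⟫ := hTsym n _ _
    have e2 : ⟪z, z⟫ = ⟪u, T n (T n u)⟫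
        + ((2 * ε n) • ⟪u, T n u⟫ + (ε n * ε n) • ⟪u, u⟫) := by
      rw [← hz]
      have expand : ∀ w : E, (T n + ε n • (1 : E →L[ℂ] E)) w = T n w + ε n • w := by
        intro w; simp
      rw [expand u]
      simp only [CStarModuleOld.inner_add_left, CStarModuleOld.inner_add_right,
        CStarModuleOld.inner_smul_left_real, CStarModuleOld.inner_smul_right_real, hTsym n]
      module
    have e3 : ⟪u, T n (T n u)⟫ ≤ ⟪z, z⟫ := by
      rw [e2]
      refine le_add_of_nonneg_right ?_
      exact add_nonneg (smul_nonneg (by positivity) (hTpos n u))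
        (smul_nonneg (by positivity) CStarModuleOld.inner_self_nonneg)
    have e4 : (0:A) ≤ ⟪u, T n (T n u)⟫ := e1 ▸ CStarModuleOld.inner_self_nonneg
    have e5 : ‖T n u‖ ^ 2 ≤ ‖z‖ ^ 2 := by
      rw [CStarModuleOld.norm_sq_eq (A := A), CStarModuleOld.norm_sq_eq (A := A), e1]
      exact CStarAlgebra.norm_le_norm_of_nonneg_of_le e4 e3
    exact (pow_le_pow_iff_left₀ (norm_nonneg _) (norm_nonneg _) two_ne_zero).mp e5
  have hxb : ∀ n, ‖x n‖ ≤ C := by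
    intro n
    have h1 : ‖x n‖ ^ 2 ≤ C * ‖x n‖ := by
      rw [CStarModuleOld.norm_sq_eq (A := A), hxz n (x n)]
      calc ‖f.toFun (T n (S n (x n)))‖ ≤ C * ‖T n (S n (x n))‖ := hC _
        _ ≤ C * ‖x n‖ := by gcongr; exact hTSle n (x n)
    nlinarith [norm_nonneg (x n), hCpos]
  -- the key estimate at the generators
  have hest : ∀ n j, j ≤ n → ‖⟪x n, g j⟫ - f.toFun (g j)‖ ≤ C * Real.sqrt (ε n) := by
    intro n j hj
    have hjmem : j ∈ Finset.range (n+1) := Finset.mem_range.mpr (Nat.lt_succ_of_le hj)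
    set u : E := S n (g j) with hu
    set w : A := ⟪u, g j⟫ with hw
    have hgj : (T n + ε n • (1 : E →L[ℂ] E)) u = g j := hUS n (g j)
    have hw_eq : w = ⟪u, T n u⟫ + ε n • ⟪u, u⟫ := by
      rw [hw, ← hgj]
      have : (T n + ε n • (1 : E →L[ℂ] E)) u = T n u + ε n • u := by simp
      rw [this, CStarModuleOld.inner_add_right, CStarModuleOld.inner_smul_right_real]
    have hw_nonneg : (0:A) ≤ w := by
      rw [hw_eq]
      exact add_nonneg (hTpos n u) (smul_nonneg (hε n).le CStarModuleOld.inner_self_nonneg)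
    -- w * star w ≤ w
    have hsplit : ⟪u, T n u⟫ = w * star w
        + ∑ i ∈ (Finset.range (n+1)).erase j, ⟪u, myTheta (A := A) (g i) u⟫ := by
      rw [hTapp, CStarModuleOld.inner_sum_right, ← Finset.add_sum_erase _ _ hjmem]
      congr 1
      rw [inner_myTheta, ← CStarModuleOld.star_inner u (g j)]
    have hrest : (0:A) ≤ ∑ i ∈ (Finset.range (n+1)).erase j, ⟪u, myTheta (A := A) (g i) u⟫ :=
      Finset.sum_nonneg fun i _ => inner_myTheta_self_nonneg (g i) u
    have hkey : w = w * star w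
        + ∑ i ∈ (Finset.range (n+1)).erase j, ⟪u, myTheta (A := A) (g i) u⟫ + ε n • ⟪u, u⟫ := by
      calc w = ⟪u, T n u⟫ + ε n • ⟪u, u⟫ := hw_eq
        _ = w * star w + ∑ i ∈ (Finset.range (n+1)).erase j, ⟪u, myTheta (A := A) (g i) u⟫
            + ε n • ⟪u, u⟫ := by rw [hsplit]
    have hww : w * star w ≤ w := by
      conv_rhs => rw [hkey]
      calc w * star w ≤ w * star w
            + ∑ i ∈ (Finset.range (n+1)).erase j, ⟪u, myTheta (A := A) (g i) u⟫ :=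
          le_add_of_nonneg_right hrest
        _ ≤ w * star w + ∑ i ∈ (Finset.range (n+1)).erase j, ⟪u, myTheta (A := A) (g i) u⟫
            + ε n • ⟪u, u⟫ :=
          le_add_of_nonneg_right (smul_nonneg (hε n).le CStarModuleOld.inner_self_nonneg)
    have hwnorm : ‖w‖ ≤ 1 := by
      have h1 : ‖w * star w‖ = ‖w‖ ^ 2 := by
        rw [CStarRing.norm_self_mul_star, sq]
      have h2 : ‖w * star w‖ ≤ ‖w‖ :=
        CStarAlgebra.norm_le_norm_of_nonneg_of_le (mul_star_self_nonneg w) hww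
      nlinarith [norm_nonneg w]
    -- ‖ε n • u‖ ≤ √(ε n)
    have hεu : ‖ε n • u‖ ≤ Real.sqrt (ε n) := by
      have h1 : ‖ε n • u‖ ^ 2 = (ε n * ε n) * ‖⟪u, u⟫‖ := by
        rw [CStarModuleOld.norm_sq_eq (A := A), CStarModuleOld.inner_smul_left_real,
          CStarModuleOld.inner_smul_right_real, smul_smul, norm_smul, Real.norm_eq_abs,
          abs_of_pos (by positivity)]
      have h2 : ε n • ⟪u, u⟫ ≤ w := by
        rw [hw_eq]; exact le_add_of_nonneg_left (hTpos n u)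
      have h3 : ‖ε n • ⟪u, u⟫‖ ≤ 1 :=
        (CStarAlgebra.norm_le_norm_of_nonneg_of_le
          (smul_nonneg (hε n).le CStarModuleOld.inner_self_nonneg) h2).trans hwnorm
      have h4 : ε n * ‖⟪u, u⟫‖ ≤ 1 := by
        rw [norm_smul, Real.norm_eq_abs, abs_of_pos (hε n)] at h3
        exact h3
      have h5 : ‖ε n • u‖ ^ 2 ≤ ε n := by
        rw [h1]
        calc ε n * ε n * ‖⟪u, u⟫‖ = ε n * (ε n * ‖⟪u, u⟫‖) := by ring
          _ ≤ ε n * 1 := by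
              exact mul_le_mul_of_nonneg_left h4 (hε n).le
          _ = ε n := mul_one _
      calc ‖ε n • u‖ = Real.sqrt (‖ε n • u‖ ^ 2) := (Real.sqrt_sq (norm_nonneg _)).symm
        _ ≤ Real.sqrt (ε n) := Real.sqrt_le_sqrt h5
    -- assemble
    have hdiff : ⟪x n, g j⟫ - f.toFun (g j) = - f.toFun (ε n • u) := by
      rw [hxz n (g j), hTS_eq n (g j), ← hu, ← hFeq, ← hFeq, ← hFeq, ← map_sub, ← map_neg]
      congr 1
      abel
    rw [hdiff, norm_neg]
    calc ‖f.toFun (ε n • u)‖ ≤ C * ‖ε n • u‖ := hC _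
      _ ≤ C * Real.sqrt (ε n) := by gcongr
  -- convergence at the generators
  have hsqrt0 : Tendsto (fun n => C * Real.sqrt (ε n)) atTop (𝓝 0) := by
    have h1 : Tendsto ε atTop (𝓝 0) := by
      rw [hεdef]
      exact tendsto_one_div_add_atTop_nhds_zero_nat
    have h2 : Tendsto (fun n => Real.sqrt (ε n)) atTop (𝓝 0) := by
      have := (Real.continuous_sqrt.tendsto' 0 0 Real.sqrt_zero).comp h1
      exact this
    simpa using h2.const_mul C
  set P : E → Prop := fun z => Tendsto (fun n => ⟪x n, z⟫) atTop (𝓝 (f.toFun z)) with hP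
  have Pg : ∀ j, P (g j) := by
    intro j
    show Tendsto (fun n => ⟪x n, g j⟫) atTop (𝓝 (f.toFun (g j)))
    rw [tendsto_iff_norm_sub_tendsto_zero]
    refine squeeze_zero' (Eventually.of_forall fun n => norm_nonneg _) ?_ hsqrt0
    rw [eventually_atTop]
    exact ⟨j, fun n hn => hest n j hn⟩
  have PS : ∀ z ∈ Sset, P z := by
    rintro z ⟨i, a, rfl⟩
    have h1 : (fun n => ⟪x n, MulOpposite.op a • g i⟫) = fun n => ⟪x n, g i⟫ * a := by
      funext n
      rw [CStarModuleOld.inner_op_smul_right]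
    show Tendsto (fun n => ⟪x n, MulOpposite.op a • g i⟫) atTop
      (𝓝 (f.toFun (MulOpposite.op a • g i)))
    rw [h1, f.map_op_smul']
    exact (Pg i).mul tendsto_const_nhds
  have Pzero : P 0 := by
    show Tendsto (fun n => ⟪x n, (0:E)⟫) atTop (𝓝 (f.toFun 0))
    have h1 : (fun n => ⟪x n, (0:E)⟫) = fun _ => (0:A) := by
      funext n; exact CStarModuleOld.inner_zero_right
    have h2 : f.toFun 0 = 0 := by rw [← hFeq]; exact map_zero F
    rw [h1, h2]
    exact tendsto_const_nhds
  have Padd : ∀ y z : E, P y → P z → P (y + z) := by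
    intro y z hy hz
    show Tendsto (fun n => ⟪x n, y + z⟫) atTop (𝓝 (f.toFun (y + z)))
    have h1 : (fun n => ⟪x n, y + z⟫) = fun n => ⟪x n, y⟫ + ⟪x n, z⟫ := by
      funext n; exact CStarModuleOld.inner_add_right
    rw [h1, f.map_add']
    exact hy.add hz
  -- every element of the closure of Sset satisfies P
  have hclosure : ∀ z ∈ AddSubmonoid.closure Sset, P z := by
    intro z hz
    induction hz using AddSubmonoid.closure_induction with
    | mem y hy => exact PS y hy
    | zero => exact Pzero
    | add a b _ _ ha hb => exact Padd a b ha hb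
  -- Sset is stable under ℂ-scaling, so the span is inside the additive closure
  have hsmul_mem : ∀ (c : ℂ), ∀ z ∈ AddSubmonoid.closure Sset,
      c • z ∈ AddSubmonoid.closure Sset := by
    intro c z hz
    induction hz using AddSubmonoid.closure_induction with
    | mem y hy =>
        obtain ⟨i, a, rfl⟩ := hy
        refine AddSubmonoid.subset_closure ?_
        exact ⟨i, c • a, my_smul_op c a (g i)⟩
    | zero => rw [smul_zero]; exact (AddSubmonoid.closure Sset).zero_mem
    | add a b _ _ ha hb => rw [smul_add]; exact (AddSubmonoid.closure Sset).add_mem ha hb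
  have hspan : (Submodule.span ℂ Sset : Set E) ⊆ ↑(AddSubmonoid.closure Sset) := by
    intro z hz
    induction hz using Submodule.span_induction with
    | mem y hy => exact AddSubmonoid.subset_closure hy
    | zero => exact (AddSubmonoid.closure Sset).zero_mem
    | add a b _ _ ha hb => exact (AddSubmonoid.closure Sset).add_mem ha hb
    | smul c y _ hy => exact hsmul_mem c y hy
  -- finish by density
  refine ⟨x, fun z => ?_⟩
  rw [Metric.tendsto_atTop]
  intro δ hδ
  have hr : (0:ℝ) < δ / (3 * C) := by positivity
  obtain ⟨s, hs_ball, hs_mem⟩ := (Metric.dense_iff.mp hg z (δ / (3 * C)) hr)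
  have hPs : P s := hclosure s (hspan hs_mem)
  obtain ⟨N, hN⟩ := (Metric.tendsto_atTop.mp hPs) (δ / 3) (by positivity)
  refine ⟨N, fun n hn => ?_⟩
  have hzs : ‖z - s‖ < δ / (3 * C) := by
    rw [← dist_eq_norm]
    exact Metric.mem_ball'.mp hs_ball
  have hb1 : ‖⟪x n, z⟫ - ⟪x n, s⟫‖ < δ / 3 := by
    rw [← CStarModuleOld.inner_sub_right]
    calc ‖⟪x n, z - s⟫‖ ≤ ‖x n‖ * ‖z - s‖ := CStarModuleOld.norm_inner_le E
      _ ≤ C * ‖z - s‖ := by gcongr; exact hxb n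
      _ < C * (δ / (3 * C)) := by gcongr
      _ = δ / 3 := by field_simp
  have hb2 : ‖⟪x n, s⟫ - f.toFun s‖ < δ / 3 := by
    rw [← dist_eq_norm]
    exact hN n hn
  have hb3 : ‖f.toFun s - f.toFun z‖ < δ / 3 := by
    rw [← hFeq, ← hFeq, ← map_sub]
    calc ‖F (s - z)‖ ≤ C * ‖s - z‖ := hC _
      _ = C * ‖z - s‖ := by rw [norm_sub_rev]
      _ < C * (δ / (3 * C)) := by gcongr
      _ = δ / 3 := by field_simp
  rw [dist_eq_norm]
  calc ‖⟪x n, z⟫ - f.toFun z‖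
      = ‖(⟪x n, z⟫ - ⟪x n, s⟫) + (⟪x n, s⟫ - f.toFun s) + (f.toFun s - f.toFun z)‖ := by
        congr 1; abel
    _ ≤ ‖⟪x n, z⟫ - ⟪x n, s⟫‖ + ‖⟪x n, s⟫ - f.toFun s‖ + ‖f.toFun s - f.toFun z‖ :=
        norm_add₃_le
    _ < δ / 3 + δ / 3 + δ / 3 := by linarith
    _ = δ := by ring
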